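/- For every reversible n-pebble transducer T (possibly with equality tests) with state set Q, there exists a reversible n-pebble transducer T̄ with the same state set Q such that dom⟦T̄⟧ = dom⟦T⟧ and, for every u ∈ dom⟦T⟧, the word ⟦T̄⟧(u) is the reverse of the word ⟦T⟧(u). -/

import Mathlib

/-!
Common framework: pebble transducers with equality tests
(following "Reversible Pebble Transducers").
-/

namespace RevPeb

/-- Atomic tests: `headPeb i` is `(h = p_i)`, `pebPeb i j` is `(p_i = p_j)`
(indices are 0-based, pebble `i+1` of the paper). -/
inductive Atom (k : ℕ) : Type where
  | headPeb : Fin k → Atom k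
  | pebPeb : Fin k → Fin k → Atom k

/-- Pebble operations (0-based: `drop i`/`lift i` refer to pebble `i+1` of the paper). -/
inductive PebOp (k : ℕ) : Type where
  | nop : PebOp k
  | drop : Fin k → PebOp k
  | lift : Fin k → PebOp k

/-- A test is a conjunction of literals: an atom together with a polarity. -/
abbrev Test (k : ℕ) : Type := List (Atom k × Bool)

/-- A transition `(q, a, φ, op, q')`; `letter = none` encodes the endmarker `#`. -/
structure PTrans (Q Sg : Type*) (k : ℕ) where
  src : Q
  letter : Option Sg
  test : Test k
  op : PebOp k
  tgt : Q

/-- A `k`-pebble transducer with equality tests (data part).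
`dir q` is the polarity of state `q` (which part of `Q_{+1} ⊎ Q_0 ⊎ Q_{-1}` it lies in). -/
structure PT (Q Sg Gm : Type*) (k : ℕ) where
  dir : Q → SignType
  qinit : Q
  qfin : Q
  δ : Set (PTrans Q Sg k)
  μ : PTrans Q Sg k → List Gm

variable {Q Sg Gm : Type*} {k : ℕ}

/-- Well-formedness: `q_i, q_f ∈ Q_0`, `q_i ≠ q_f`, no transition leaves `q_f`
nor enters `q_i`, and the transition set is finite. -/
def PT.WF (T : PT Q Sg Gm k) : Prop :=
  T.dir T.qinit = 0 ∧ T.dir T.qfin = 0 ∧ T.qinit ≠ T.qfin ∧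
  (∀ t ∈ T.δ, t.src ≠ T.qfin ∧ t.tgt ≠ T.qinit) ∧ T.δ.Finite

/-- Letter of the circular word `#u` at position `h ∈ {0,…,|u|}`;
`none` is the endmarker `#` (at position 0). -/
def letterAt (u : List Sg) (h : ℕ) : Option Sg :=
  if h = 0 then none else u[h-1]?

/-- Satisfaction of an atomic test by a pebble stack and head position. -/
def atomSat (peb : List ℕ) (h : ℕ) : Atom k → Prop
  | .headPeb i => (i : ℕ) < peb.length ∧ peb.getD i 0 = h
  | .pebPeb i j => (i : ℕ) < peb.length ∧ (j : ℕ) < peb.length ∧ peb.getD i 0 = peb.getD j 0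

/-- Satisfaction of a test (conjunction of literals). -/
def testSat (peb : List ℕ) (h : ℕ) (φ : Test k) : Prop :=
  ∀ l ∈ φ, (atomSat peb h l.1 ↔ l.2 = true)

/-- Executability of a pebble operation: `drop i` (pebble `i+1` of the paper) needs
`|peb| = i`, `lift i` needs `|peb| = i+1` and the top pebble at the head. -/
def opEnabled (peb : List ℕ) (h : ℕ) : PebOp k → Prop
  | .nop => True
  | .drop n => peb.length = (n : ℕ)
  | .lift n => peb.length = (n : ℕ) + 1 ∧ peb.getD (n : ℕ) 0 = h

/-- Effect of a pebble operation on the pebble stack. -/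
def opApply (peb : List ℕ) (h : ℕ) : PebOp k → List ℕ
  | .nop => peb
  | .drop _ => peb ++ [h]
  | .lift _ => peb.dropLast

/-- Head movement on the circular word `#u` (`len = |u|`, positions mod `len+1`). -/
def nextHead (len h : ℕ) : SignType → ℕ
  | .pos => (h + 1) % (len + 1)
  | .zero => h
  | .neg => (h + len) % (len + 1)

/-- A configuration `(q, peb, h)`. -/
structure Config (Q : Type*) where
  q : Q
  peb : List ℕ
  h : ℕ

/-- One step of the transducer on input `u` using transition `t`. -/
def PT.StepT (T : PT Q Sg Gm k) (u : List Sg) (t : PTrans Q Sg k) (C C' : Config Q) : Prop :=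
  t ∈ T.δ ∧ C.q = t.src ∧ C.h ≤ u.length ∧ C.peb.length ≤ k ∧
  letterAt u C.h = t.letter ∧
  testSat C.peb C.h t.test ∧ opEnabled C.peb C.h t.op ∧
  C'.q = t.tgt ∧ C'.peb = opApply C.peb C.h t.op ∧
  C'.h = nextHead u.length C.h (T.dir t.tgt)

/-- Runs, accumulating the produced output word. -/
inductive PT.Run (T : PT Q Sg Gm k) (u : List Sg) :
    Config Q → Config Q → List Gm → Prop where
  | refl (C : Config Q) : PT.Run T u C C []
  | step {C C' C'' : Config Q} (t : PTrans Q Sg k) {v : List Gm} :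
      T.StepT u t C C' → PT.Run T u C' C'' v → PT.Run T u C C'' (T.μ t ++ v)

/-- Semantics: pairs `(u,v)` such that some accepting run on `#u` outputs `v`. -/
def PT.Sem (T : PT Q Sg Gm k) : Set (List Sg × List Gm) :=
  {p | T.Run p.1 ⟨T.qinit, [], 0⟩ ⟨T.qfin, [], 0⟩ p.2}

/-- `t` is enabled at configuration `C` (on input `u`). -/
def PT.Enabled (T : PT Q Sg Gm k) (u : List Sg) (t : PTrans Q Sg k) (C : Config Q) : Prop :=
  ∃ C', T.StepT u t C C'

/-- `t` is reverse-enabled at configuration `C'` (on input `u`). -/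
def PT.RevEnabled (T : PT Q Sg Gm k) (u : List Sg) (t : PTrans Q Sg k) (C' : Config Q) : Prop :=
  ∃ C, T.StepT u t C C'

/-- Determinism: two transitions simultaneously enabled at a common configuration coincide. -/
def PT.Deterministic (T : PT Q Sg Gm k) : Prop :=
  ∀ (u : List Sg) (t₁ t₂ : PTrans Q Sg k) (C : Config Q),
    T.Enabled u t₁ C → T.Enabled u t₂ C → t₁ = t₂

/-- Reverse-determinism. -/
def PT.RevDeterministic (T : PT Q Sg Gm k) : Prop :=
  ∀ (u : List Sg) (t₁ t₂ : PTrans Q Sg k) (C' : Config Q),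
    T.RevEnabled u t₁ C' → T.RevEnabled u t₂ C' → t₁ = t₂

/-- Reversible = deterministic and reverse-deterministic. -/
def PT.Reversible (T : PT Q Sg Gm k) : Prop := T.Deterministic ∧ T.RevDeterministic

/-- A basic pebble transducer uses no pebble-pebble equality atoms. -/
def PT.Basic (T : PT Q Sg Gm k) : Prop :=
  ∀ t ∈ T.δ, ∀ l ∈ t.test, ∀ i j : Fin k, l.1 ≠ Atom.pebPeb i j

/-- `T` computes the partial function `f` (encoded with `Option`): `⟦T⟧` is the graph of `f`. -/
def PT.Computes (T : PT Q Sg Gm k) (f : List Sg → Option (List Gm)) : Prop :=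
  ∀ u v, (u, v) ∈ T.Sem ↔ f u = some v

end RevPeb


namespace RevPeb

open Classical

variable {Q Sg Gm : Type*} {k : ℕ}

/-! ### List auxiliary lemmas -/

lemma getD_append_lt (l : List ℕ) (x : ℕ) {j : ℕ} (hj : j < l.length) :
    (l ++ [x]).getD j 0 = l.getD j 0 := by
  simp [List.getD_eq_getElem?_getD, List.getElem?_append_left hj]

lemma getD_append_len (l : List ℕ) (x : ℕ) : (l ++ [x]).getD l.length 0 = x := by
  simp [List.getD_eq_getElem?_getD]

lemma getD_dropLast (l : List ℕ) {j : ℕ} (h : j + 1 < l.length) :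
    l.dropLast.getD j 0 = l.getD j 0 := by
  have hj : j < l.dropLast.length := by simp [List.length_dropLast]; omega
  have hj2 : j < l.length := by omega
  rw [List.getD_eq_getElem?_getD, List.getD_eq_getElem?_getD,
      List.getElem?_eq_getElem hj, List.getElem?_eq_getElem hj2, List.getElem_dropLast]

lemma dropLast_append_getD (l : List ℕ) {x : ℕ} (h : l ≠ [])
    (hl : l.getD (l.length - 1) 0 = x) : l.dropLast ++ [x] = l := by
  have hne : 0 < l.length := List.length_pos_iff.mpr h
  have h2 := List.dropLast_append_getLast h
  rw [List.getLast_eq_getElem] at h2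
  rw [List.getD_eq_getElem?_getD, List.getElem?_eq_getElem (by omega)] at hl
  simp only [Option.getD_some] at hl
  rw [hl] at h2; exact h2

/-! ### Inverse pebble operations -/

def opInv : PebOp k → PebOp k
  | .nop => .nop
  | .drop i => .lift i
  | .lift i => .drop i

lemma opInv_opInv (op : PebOp k) : opInv (opInv op) = op := by cases op <;> rfl

lemma opInv_inj {o₁ o₂ : PebOp k} (h : opInv o₁ = opInv o₂) : o₁ = o₂ := by
  have h2 := congrArg opInv h
  rwa [opInv_opInv, opInv_opInv] at h2

lemma opApply_opInv {peb : List ℕ} {h : ℕ} {op : PebOp k} (hop : opEnabled peb h op) :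
    opApply (opApply peb h op) h (opInv op) = peb := by
  cases op with
  | nop => rfl
  | drop i => simp [opApply, opInv]
  | lift i =>
    obtain ⟨h1, h2⟩ := hop
    show peb.dropLast ++ [h] = peb
    refine dropLast_append_getD _ (by intro e; rw [e] at h1; simp at h1) ?_
    rw [show peb.length - 1 = (i : ℕ) by omega]
    exact h2

lemma opEnabled_opInv {peb : List ℕ} {h : ℕ} {op : PebOp k} (hop : opEnabled peb h op) :
    opEnabled (opApply peb h op) h (opInv op) := by
  cases op with
  | nop => trivial
  | drop i =>
    have hl : peb.length = (i : ℕ) := hop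
    refine ⟨by simp [opApply, hl], ?_⟩
    show (peb ++ [h]).getD (i : ℕ) 0 = h
    rw [← hl]; exact getD_append_len _ _
  | lift i =>
    obtain ⟨h1, h2⟩ := hop
    show peb.dropLast.length = (i : ℕ)
    simp [List.length_dropLast, h1]

lemma opApply_length_le {peb : List ℕ} {h : ℕ} {op : PebOp k}
    (hop : opEnabled peb h op) (hp : peb.length ≤ k) : (opApply peb h op).length ≤ k := by
  cases op with
  | nop => exact hp
  | drop i =>
    have hl : peb.length = (i : ℕ) := hop
    have := i.isLt
    simp [opApply, hl]
  | lift i => simp only [opApply, List.length_dropLast]; omega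

/-! ### Test translation -/

def falseG (i : Fin k) : Test k := [(Atom.headPeb i, true), (Atom.headPeb i, false)]

def constF (i : Fin k) (b : Bool) : Test k := if b then falseG i else []

def constT (i : Fin k) (b : Bool) : Test k := if b then [] else falseG i

def trLit : PebOp k → (Atom k × Bool) → Test k
  | .nop, l => [l]
  | .drop i, (.headPeb j, b) =>
      if (j : ℕ) = (i : ℕ) then constF i b else [(.headPeb j, b)]
  | .drop i, (.pebPeb j l, b) =>
      if (j : ℕ) = (i : ℕ) ∨ (l : ℕ) = (i : ℕ) then constF i b else [(.pebPeb j l, b)]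
  | .lift i, (.headPeb j, b) =>
      if (j : ℕ) = (i : ℕ) then constT i b else [(.headPeb j, b)]
  | .lift i, (.pebPeb j l, b) =>
      if (j : ℕ) = (i : ℕ) ∧ (l : ℕ) = (i : ℕ) then constT i b
      else if (j : ℕ) = (i : ℕ) ∧ (l : ℕ) < (i : ℕ) then [(.headPeb l, b)]
      else if (l : ℕ) = (i : ℕ) ∧ (j : ℕ) < (i : ℕ) then [(.headPeb j, b)]
      else [(.pebPeb j l, b)]

def trTest (op : PebOp k) (φ : Test k) : Test k := (φ.map (trLit op)).flatten

lemma not_testSat_falseG (P : List ℕ) (h : ℕ) (i : Fin k) : ¬ testSat P h (falseG i) := by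
  intro H
  have h1 := H (Atom.headPeb i, true) (by simp [falseG])
  have h2 := H (Atom.headPeb i, false) (by simp [falseG])
  simp at h1 h2
  exact h2 h1

lemma testSat_constF (P : List ℕ) (h : ℕ) (i : Fin k) (b : Bool) :
    testSat P h (constF i b) ↔ (False ↔ b = true) := by
  cases b with
  | false => simp [constF, testSat]
  | true => simp [constF, not_testSat_falseG P h i]

lemma testSat_constT (P : List ℕ) (h : ℕ) (i : Fin k) (b : Bool) :
    testSat P h (constT i b) ↔ (True ↔ b = true) := by
  cases b with
  | false => simp [constT, not_testSat_falseG P h i]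
  | true => simp [constT, testSat]

lemma testSat_single (P : List ℕ) (h : ℕ) (l : Atom k × Bool) :
    testSat P h [l] ↔ (atomSat P h l.1 ↔ l.2 = true) := by
  simp [testSat]

lemma trLit_sound {peb : List ℕ} {h : ℕ} {op : PebOp k} (hop : opEnabled peb h op)
    (A : Atom k) (b : Bool) :
    testSat (opApply peb h op) h (trLit op (A, b)) ↔ (atomSat peb h A ↔ b = true) := by
  cases op with
  | nop => simp [trLit, opApply, testSat_single]
  | drop i =>
    have hlen : peb.length = (i : ℕ) := hop
    cases A with
    | headPeb j =>
      by_cases hj : (j : ℕ) = (i : ℕ)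
      · rw [show trLit (.drop i) (Atom.headPeb j, b) = constF i b by simp [trLit, hj],
            testSat_constF]
        have hA : ¬ atomSat peb h (Atom.headPeb j) := by
          simp only [atomSat]; rintro ⟨h1, -⟩; omega
        simp [hA]
      · rw [show trLit (.drop i) (Atom.headPeb j, b) = [(Atom.headPeb j, b)] by
            simp [trLit, hj], testSat_single]
        have key : atomSat (opApply peb h (.drop i)) h (Atom.headPeb j)
            ↔ atomSat peb h (Atom.headPeb j) := by
          simp only [atomSat, opApply, List.length_append, List.length_singleton]
          rcases Nat.lt_or_ge (j : ℕ) (i : ℕ) with hlt | hge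
          · rw [getD_append_lt _ _ (by omega)]
            constructor <;> rintro ⟨-, h2⟩ <;> exact ⟨by omega, h2⟩
          · constructor <;> rintro ⟨h1, -⟩ <;> omega
        rw [key]
    | pebPeb j l =>
      by_cases hj : (j : ℕ) = (i : ℕ) ∨ (l : ℕ) = (i : ℕ)
      · rw [show trLit (.drop i) (Atom.pebPeb j l, b) = constF i b by simp [trLit, hj],
            testSat_constF]
        have hA : ¬ atomSat peb h (Atom.pebPeb j l) := by
          simp only [atomSat]; rintro ⟨h1, h2, -⟩; omega
        simp [hA]
      · push_neg at hj
        rw [show trLit (.drop i) (Atom.pebPeb j l, b) = [(Atom.pebPeb j l, b)] by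
            simp [trLit, hj.1, hj.2], testSat_single]
        have key : atomSat (opApply peb h (.drop i)) h (Atom.pebPeb j l)
            ↔ atomSat peb h (Atom.pebPeb j l) := by
          simp only [atomSat, opApply, List.length_append, List.length_singleton]
          by_cases hb : (j : ℕ) < (i : ℕ) ∧ (l : ℕ) < (i : ℕ)
          · rw [getD_append_lt _ _ (show (j:ℕ) < peb.length by omega),
                getD_append_lt _ _ (show (l:ℕ) < peb.length by omega)]
            constructor <;> rintro ⟨-, -, h3⟩ <;> exact ⟨by omega, by omega, h3⟩
          · have : (i : ℕ) < (j : ℕ) ∨ (i : ℕ) < (l : ℕ) := by omega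
            constructor <;> rintro ⟨h1, h2, -⟩ <;> omega
        rw [key]
  | lift i =>
    obtain ⟨hlen, hget⟩ := hop
    have hlen' : peb.dropLast.length = (i : ℕ) := by simp [List.length_dropLast, hlen]
    cases A with
    | headPeb j =>
      by_cases hj : (j : ℕ) = (i : ℕ)
      · rw [show trLit (.lift i) (Atom.headPeb j, b) = constT i b by simp [trLit, hj],
            testSat_constT]
        have hA : atomSat peb h (Atom.headPeb j) := by
          simp only [atomSat]
          refine ⟨by omega, ?_⟩
          rw [show (j : ℕ) = (i : ℕ) from hj]; exact hget
        simp [hA]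
      · rw [show trLit (.lift i) (Atom.headPeb j, b) = [(Atom.headPeb j, b)] by
            simp [trLit, hj], testSat_single]
        have key : atomSat (opApply peb h (.lift i)) h (Atom.headPeb j)
            ↔ atomSat peb h (Atom.headPeb j) := by
          simp only [atomSat, opApply, List.length_dropLast]
          rcases Nat.lt_or_ge (j : ℕ) (i : ℕ) with hlt | hge
          · rw [getD_dropLast _ (by omega)]
            constructor <;> rintro ⟨-, h2⟩ <;> exact ⟨by omega, h2⟩
          · constructor <;> rintro ⟨h1, -⟩ <;> omega
        rw [key]
    | pebPeb j l =>
      by_cases hb1 : (j : ℕ) = (i : ℕ) ∧ (l : ℕ) = (i : ℕ)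
      · rw [show trLit (.lift i) (Atom.pebPeb j l, b) = constT i b by simp [trLit, hb1],
            testSat_constT]
        have hA : atomSat peb h (Atom.pebPeb j l) := by
          simp only [atomSat]
          exact ⟨by omega, by omega, by rw [hb1.1, hb1.2]⟩
        simp [hA]
      · by_cases hb2 : (j : ℕ) = (i : ℕ) ∧ (l : ℕ) < (i : ℕ)
        · rw [show trLit (.lift i) (Atom.pebPeb j l, b) = [(Atom.headPeb l, b)] by
              simp only [trLit]; rw [if_neg hb1, if_pos hb2], testSat_single]
          have key : atomSat (opApply peb h (.lift i)) h (Atom.headPeb l)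
              ↔ atomSat peb h (Atom.pebPeb j l) := by
            simp only [atomSat, opApply, List.length_dropLast]
            rw [getD_dropLast _ (by omega), show (j : ℕ) = (i : ℕ) from hb2.1, hget]
            constructor
            · rintro ⟨-, h2⟩; exact ⟨by omega, by omega, h2.symm⟩
            · rintro ⟨-, -, h3⟩; exact ⟨by omega, h3.symm⟩
          rw [key]
        · by_cases hb3 : (l : ℕ) = (i : ℕ) ∧ (j : ℕ) < (i : ℕ)
          · rw [show trLit (.lift i) (Atom.pebPeb j l, b) = [(Atom.headPeb j, b)] by
                simp only [trLit]; rw [if_neg hb1, if_neg hb2, if_pos hb3], testSat_single]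
            have key : atomSat (opApply peb h (.lift i)) h (Atom.headPeb j)
                ↔ atomSat peb h (Atom.pebPeb j l) := by
              simp only [atomSat, opApply, List.length_dropLast]
              rw [getD_dropLast _ (by omega), show (l : ℕ) = (i : ℕ) from hb3.1, hget]
              constructor
              · rintro ⟨-, h2⟩; exact ⟨by omega, by omega, h2⟩
              · rintro ⟨-, -, h3⟩; exact ⟨by omega, h3⟩
            rw [key]
          · rw [show trLit (.lift i) (Atom.pebPeb j l, b) = [(Atom.pebPeb j l, b)] by
                simp only [trLit]; rw [if_neg hb1, if_neg hb2, if_neg hb3], testSat_single]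
            have key : atomSat (opApply peb h (.lift i)) h (Atom.pebPeb j l)
                ↔ atomSat peb h (Atom.pebPeb j l) := by
              simp only [atomSat, opApply, List.length_dropLast]
              by_cases hc : (j : ℕ) < (i : ℕ) ∧ (l : ℕ) < (i : ℕ)
              · rw [getD_dropLast _ (by omega), getD_dropLast _ (by omega)]
                constructor <;> rintro ⟨-, -, h3⟩ <;> exact ⟨by omega, by omega, h3⟩
              · have : (i : ℕ) < (j : ℕ) ∨ (i : ℕ) < (l : ℕ) := by omega
                constructor <;> rintro ⟨h1, h2, -⟩ <;> omega
            rw [key]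

lemma trTest_sound {peb : List ℕ} {h : ℕ} {op : PebOp k} (hop : opEnabled peb h op)
    (φ : Test k) :
    testSat (opApply peb h op) h (trTest op φ) ↔ testSat peb h φ := by
  constructor
  · intro H lit hlit
    have hs : testSat (opApply peb h op) h (trLit op (lit.1, lit.2)) := by
      intro l' hl'
      refine H l' ?_
      rw [trTest, List.mem_flatten]
      exact ⟨trLit op lit, List.mem_map_of_mem hlit, by rwa [Prod.mk.eta] at hl'⟩
    exact (trLit_sound hop lit.1 lit.2).mp hs
  · intro H l' hl'
    rw [trTest, List.mem_flatten] at hl'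
    obtain ⟨s, hs, hl's⟩ := hl'
    rw [List.mem_map] at hs
    obtain ⟨lit, hlit, rfl⟩ := hs
    exact (trLit_sound hop lit.1 lit.2).mpr (H lit hlit) l' (by rwa [Prod.mk.eta])

/-! ### Head movement inversion -/

lemma nextHead_neg (len : ℕ) {h : ℕ} (hh : h ≤ len) (d : SignType) :
    nextHead len (nextHead len h d) (-d) = h := by
  cases d with
  | zero => rfl
  | pos =>
    show ((h + 1) % (len + 1) + len) % (len + 1) = h
    rw [Nat.mod_add_mod, show h + 1 + len = h + (len + 1) by omega, Nat.add_mod_right]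
    exact Nat.mod_eq_of_lt (by omega)
  | neg =>
    show ((h + len) % (len + 1) + 1) % (len + 1) = h
    rw [Nat.mod_add_mod, show h + len + 1 = h + (len + 1) by omega, Nat.add_mod_right]
    exact Nat.mod_eq_of_lt (by omega)

/-! ### The reverse machine -/

def rev (t : PTrans Q Sg k) : PTrans Q Sg k :=
  ⟨t.tgt, t.letter, trTest t.op t.test, opInv t.op, t.src⟩

@[simp] lemma rev_src (t : PTrans Q Sg k) : (rev t).src = t.tgt := rfl
@[simp] lemma rev_tgt (t : PTrans Q Sg k) : (rev t).tgt = t.src := rfl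
@[simp] lemma rev_letter (t : PTrans Q Sg k) : (rev t).letter = t.letter := rfl
@[simp] lemma rev_op (t : PTrans Q Sg k) : (rev t).op = opInv t.op := rfl
@[simp] lemma rev_test (t : PTrans Q Sg k) : (rev t).test = trTest t.op t.test := rfl

/-- The set of transitions of `T` that are enabled at some configuration. -/
def PT.enab (T : PT Q Sg Gm k) : Set (PTrans Q Sg k) :=
  {t | t ∈ T.δ ∧ ∃ (u : List Sg) (C C' : Config Q), T.StepT u t C C'}

/-- The reverse machine. -/
noncomputable def PT.bar (T : PT Q Sg Gm k) : PT Q Sg Gm k where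
  dir q := -T.dir q
  qinit := T.qfin
  qfin := T.qinit
  δ := rev '' T.enab
  μ s := if hs : ∃ t, t ∈ T.enab ∧ rev t = s then (T.μ hs.choose).reverse else []

lemma rev_injOn {T : PT Q Sg Gm k} (hDet : T.Deterministic) {t₁ t₂ : PTrans Q Sg k}
    (h₁ : t₁ ∈ T.enab) (h₂ : t₂ ∈ T.enab) (he : rev t₁ = rev t₂) : t₁ = t₂ := by
  obtain ⟨hδ₁, u, C, C', hst⟩ := h₁
  obtain ⟨hδ₂, -⟩ := h₂
  have hsrc : t₁.src = t₂.src := by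
    have h0 : (rev t₁).tgt = (rev t₂).tgt := congrArg PTrans.tgt he
    rwa [rev_tgt, rev_tgt] at h0
  have htgt : t₁.tgt = t₂.tgt := by
    have h0 : (rev t₁).src = (rev t₂).src := congrArg PTrans.src he
    rwa [rev_src, rev_src] at h0
  have hlet : t₁.letter = t₂.letter := by
    have h0 : (rev t₁).letter = (rev t₂).letter := congrArg PTrans.letter he
    rwa [rev_letter, rev_letter] at h0
  have hop : t₁.op = t₂.op := by
    have h0 : (rev t₁).op = (rev t₂).op := congrArg PTrans.op he
    rw [rev_op, rev_op] at h0
    exact opInv_inj h0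
  have htest : trTest t₁.op t₁.test = trTest t₂.op t₂.test := by
    have h0 : (rev t₁).test = (rev t₂).test := congrArg PTrans.test he
    rwa [rev_test, rev_test] at h0
  obtain ⟨-, hq, hh, hp, hl, hts, hoe, -, -, -⟩ := hst
  have hoe₂ : opEnabled C.peb C.h t₂.op := hop ▸ hoe
  have hts₂ : testSat C.peb C.h t₂.test := by
    have e1 := (trTest_sound hoe t₁.test).mpr hts
    rw [htest, hop] at e1
    exact (trTest_sound hoe₂ t₂.test).mp e1
  have hst₂ : T.StepT u t₂ C
      ⟨t₂.tgt, opApply C.peb C.h t₂.op, nextHead u.length C.h (T.dir t₂.tgt)⟩ :=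
    ⟨hδ₂, hq.trans hsrc, hh, hp, hl.trans (by rw [hlet]), hts₂, hoe₂, rfl, rfl, rfl⟩
  have hst₁ : T.StepT u t₁ C
      ⟨t₁.tgt, opApply C.peb C.h t₁.op, nextHead u.length C.h (T.dir t₁.tgt)⟩ :=
    ⟨hδ₁, hq, hh, hp, hl, hts, hoe, rfl, rfl, rfl⟩
  exact hDet u t₁ t₂ C ⟨_, hst₁⟩ ⟨_, hst₂⟩

lemma bar_mu {T : PT Q Sg Gm k} (hDet : T.Deterministic) {t : PTrans Q Sg k}
    (ht : t ∈ T.enab) : T.bar.μ (rev t) = (T.μ t).reverse := by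
  have hex : ∃ t', t' ∈ T.enab ∧ rev t' = rev t := ⟨t, ht, rfl⟩
  show (if hs : ∃ t', t' ∈ T.enab ∧ rev t' = rev t then (T.μ hs.choose).reverse else []) = _
  rw [dif_pos hex]
  have hspec := hex.choose_spec
  rw [rev_injOn hDet hspec.1 ht hspec.2]

/-! ### Step simulation -/

lemma step_bar {T : PT Q Sg Gm k} {u : List Sg} {t : PTrans Q Sg k} {C C' : Config Q}
    (hst : T.StepT u t C C') :
    T.bar.StepT u (rev t) ⟨t.tgt, opApply C.peb C.h t.op, C.h⟩
      ⟨t.src, C.peb, nextHead u.length C.h (-(T.dir t.src))⟩ := by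
  obtain ⟨hδ, hq, hh, hp, hl, hts, hoe, hq', hp', hh'⟩ := hst
  exact ⟨⟨t, ⟨hδ, u, C, C', ⟨hδ, hq, hh, hp, hl, hts, hoe, hq', hp', hh'⟩⟩, rfl⟩,
    rfl, hh, opApply_length_le hoe hp, hl, (trTest_sound hoe t.test).mpr hts,
    opEnabled_opInv hoe, rfl, (opApply_opInv hoe).symm, rfl⟩

lemma step_unbar {T : PT Q Sg Gm k} {u : List Sg} {s : PTrans Q Sg k} {D D' : Config Q}
    (hst : T.bar.StepT u s D D') :
    ∃ t ∈ T.enab, rev t = s ∧ T.StepT u t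
      ⟨t.src, opApply D.peb D.h (opInv t.op), D.h⟩
      ⟨t.tgt, D.peb, nextHead u.length D.h (T.dir t.tgt)⟩ := by
  obtain ⟨hδ, hq, hh, hp, hl, hts, hoe, hq', hp', hh'⟩ := hst
  obtain ⟨t, ht, rfl⟩ := hδ
  rw [rev_op] at hoe
  rw [rev_test] at hts
  have h1 : opEnabled (opApply D.peb D.h (opInv t.op)) D.h t.op := by
    have h2 := opEnabled_opInv hoe; rwa [opInv_opInv] at h2
  have h2 : opApply (opApply D.peb D.h (opInv t.op)) D.h t.op = D.peb := by
    have h3 := opApply_opInv hoe; rwa [opInv_opInv] at h3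
  refine ⟨t, ht, rfl, ht.1, rfl, hh, opApply_length_le hoe hp, hl, ?_, h1, rfl, h2.symm, rfl⟩
  rw [← h2] at hts
  exact (trTest_sound h1 t.test).mp hts

/-! ### Run lemmas -/

lemma PT.Run.snoc {T : PT Q Sg Gm k} {u : List Sg} {C C' C'' : Config Q} {v : List Gm}
    {t : PTrans Q Sg k} (hr : T.Run u C C' v) (hst : T.StepT u t C' C'') :
    T.Run u C C'' (v ++ T.μ t) := by
  induction hr with
  | refl C0 => simpa using PT.Run.step t hst (PT.Run.refl C'')
  | step t' h1 _ ih =>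
    rw [List.append_assoc]
    exact PT.Run.step t' h1 (ih hst)

lemma run_bar {T : PT Q Sg Gm k} (hDet : T.Deterministic) (hfin : T.dir T.qfin = 0)
    {u : List Sg} {C Cf : Config Q} {v : List Gm} (hr : T.Run u C Cf v)
    (hCf : Cf = ⟨T.qfin, [], 0⟩) :
    T.bar.Run u ⟨T.qfin, [], 0⟩
      ⟨C.q, C.peb, nextHead u.length C.h (-(T.dir C.q))⟩ v.reverse := by
  induction hr with
  | refl C0 =>
    subst hCf
    show T.bar.Run u _ ⟨T.qfin, [], nextHead u.length 0 (-(T.dir T.qfin))⟩ _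
    rw [show nextHead u.length 0 (-(T.dir T.qfin)) = 0 by rw [hfin]; rfl]
    exact PT.Run.refl _
  | @step C C₁ C₂ t v' hst hrun ih =>
    have ih2 := ih hCf
    have hb := step_bar hst
    obtain ⟨hδ, hq, hh, hp, hl, hts, hoe, hq', hp', hh'⟩ := hst
    have hsrcC : (⟨C₁.q, C₁.peb, nextHead u.length C₁.h (-(T.dir C₁.q))⟩ : Config Q)
        = ⟨t.tgt, opApply C.peb C.h t.op, C.h⟩ := by
      rw [hq', hp', hh', nextHead_neg u.length hh]
    have htgtC : (⟨C.q, C.peb, nextHead u.length C.h (-(T.dir C.q))⟩ : Config Q)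
        = ⟨t.src, C.peb, nextHead u.length C.h (-(T.dir t.src))⟩ := by rw [hq]
    rw [← hsrcC, ← htgtC] at hb
    have h3 := ih2.snoc hb
    rw [bar_mu hDet ⟨hδ, u, C, C₁, ⟨hδ, hq, hh, hp, hl, hts, hoe, hq', hp', hh'⟩⟩] at h3
    rw [List.reverse_append]
    exact h3

lemma run_unbar {T : PT Q Sg Gm k} (hDet : T.Deterministic) (hini : T.dir T.qinit = 0)
    {u : List Sg} {D Df : Config Q} {w : List Gm} (hr : T.bar.Run u D Df w)
    (hDf : Df = ⟨T.qinit, [], 0⟩) :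
    T.Run u ⟨T.qinit, [], 0⟩
      ⟨D.q, D.peb, nextHead u.length D.h (T.dir D.q)⟩ w.reverse := by
  induction hr with
  | refl D0 =>
    subst hDf
    show T.Run u _ ⟨T.qinit, [], nextHead u.length 0 (T.dir T.qinit)⟩ _
    rw [show nextHead u.length 0 (T.dir T.qinit) = 0 by rw [hini]; rfl]
    exact PT.Run.refl _
  | @step D D₁ D₂ s w' hst hrun ih =>
    have ih2 := ih hDf
    obtain ⟨t, ht, hrevt, hT⟩ := step_unbar hst
    subst hrevt
    obtain ⟨-, hq, hh, -, -, -, -, hq', hp', hh'⟩ := hst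
    rw [rev_tgt] at hq'
    rw [rev_op] at hp'
    rw [rev_tgt] at hh'
    have hbd : T.bar.dir t.src = -(T.dir t.src) := rfl
    rw [hbd] at hh'
    have hsrcC : (⟨D₁.q, D₁.peb, nextHead u.length D₁.h (T.dir D₁.q)⟩ : Config Q)
        = ⟨t.src, opApply D.peb D.h (opInv t.op), D.h⟩ := by
      rw [hq', hp', hh']
      have h4 := nextHead_neg u.length hh (-(T.dir t.src))
      rw [neg_neg] at h4
      rw [h4]
    have htgtC : (⟨D.q, D.peb, nextHead u.length D.h (T.dir D.q)⟩ : Config Q)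
        = ⟨t.tgt, D.peb, nextHead u.length D.h (T.dir t.tgt)⟩ := by
      rw [hq, rev_src]
    rw [← hsrcC, ← htgtC] at hT
    have h3 := ih2.snoc hT
    rw [List.reverse_append, bar_mu hDet ht, List.reverse_reverse]
    exact h3

/-! ### Reversibility of the reverse machine -/

lemma bar_det {T : PT Q Sg Gm k} (hRD : T.RevDeterministic) : T.bar.Deterministic := by
  intro u s₁ s₂ D h₁ h₂
  obtain ⟨D₁, hst₁⟩ := h₁
  obtain ⟨D₂, hst₂⟩ := h₂
  obtain ⟨t₁, ht₁, hr₁, hT₁⟩ := step_unbar hst₁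
  obtain ⟨t₂, ht₂, hr₂, hT₂⟩ := step_unbar hst₂
  subst hr₁; subst hr₂
  have e₁ : t₁.tgt = D.q := by rw [hst₁.2.1, rev_src]
  have e₂ : t₂.tgt = D.q := by rw [hst₂.2.1, rev_src]
  rw [e₁] at hT₁
  rw [e₂] at hT₂
  have : t₁ = t₂ := hRD u t₁ t₂ ⟨D.q, D.peb, nextHead u.length D.h (T.dir D.q)⟩
    ⟨_, hT₁⟩ ⟨_, hT₂⟩
  rw [this]

lemma bar_revdet {T : PT Q Sg Gm k} (hD : T.Deterministic) : T.bar.RevDeterministic := by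
  intro u s₁ s₂ D' h₁ h₂
  obtain ⟨D₁, hst₁⟩ := h₁
  obtain ⟨D₂, hst₂⟩ := h₂
  obtain ⟨t₁, ht₁, hr₁, hT₁⟩ := step_unbar hst₁
  obtain ⟨t₂, ht₂, hr₂, hT₂⟩ := step_unbar hst₂
  subst hr₁; subst hr₂
  have key : ∀ (s : PTrans Q Sg k) (D : Config Q), T.bar.StepT u s D D' →
      ∀ t : PTrans Q Sg k, rev t = s →
      (⟨t.src, opApply D.peb D.h (opInv t.op), D.h⟩ : Config Q)
        = ⟨D'.q, D'.peb, nextHead u.length D'.h (T.dir D'.q)⟩ := by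
    rintro s D hst t rfl
    obtain ⟨-, hq, hh, -, -, -, -, hq', hp', hh'⟩ := hst
    rw [rev_tgt] at hq'
    rw [rev_op] at hp'
    rw [rev_tgt] at hh'
    have hbd : T.bar.dir t.src = -(T.dir t.src) := rfl
    rw [hbd] at hh'
    rw [hq', hp', hh']
    congr 1
    have h4 := nextHead_neg u.length hh (-(T.dir t.src))
    rw [neg_neg] at h4
    rw [h4]
  have k₁ := key _ _ hst₁ t₁ rfl
  have k₂ := key _ _ hst₂ t₂ rfl
  rw [k₁] at hT₁
  rw [k₂] at hT₂
  have : t₁ = t₂ := hD u t₁ t₂ _ ⟨_, hT₁⟩ ⟨_, hT₂⟩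
  rw [this]

end RevPeb

namespace RevPeb

/-- For every reversible `n`-pebble transducer `T` (possibly with equality
tests) with state set `Q`, there is a reversible `n`-pebble transducer `T̄` with the same
state set `Q`, with the same domain, computing the reverse of the output of `T`. -/
theorem reverse_output
    {Q Sg Gm : Type} [Fintype Q] [Fintype Sg] {n : ℕ}
    (T : PT Q Sg Gm n) (hWF : T.WF) (hRev : T.Reversible) :
    ∃ Tbar : PT Q Sg Gm n, Tbar.WF ∧ Tbar.Reversible ∧
      ∀ (u : List Sg) (v : List Gm), (u, v) ∈ T.Sem ↔ (u, v.reverse) ∈ Tbar.Sem := by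
  classical
  obtain ⟨hdi, hdf, hne, htr, hfin⟩ := hWF
  obtain ⟨hDet, hRD⟩ := hRev
  refine ⟨T.bar, ⟨?_, ?_, ?_, ?_, ?_⟩, ⟨bar_det hRD, bar_revdet hDet⟩, ?_⟩
  · show -T.dir T.qfin = 0
    rw [hdf]; rfl
  · show -T.dir T.qinit = 0
    rw [hdi]; rfl
  · exact Ne.symm hne
  · rintro s ⟨t, ⟨htδ, -⟩, rfl⟩
    exact ⟨(htr t htδ).2, (htr t htδ).1⟩
  · exact (hfin.subset (fun t ht => ht.1)).image rev
  · intro u v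
    constructor
    · intro hsem
      have hsem' : T.Run u ⟨T.qinit, [], 0⟩ ⟨T.qfin, [], 0⟩ v := hsem
      have hr := run_bar hDet hdf hsem' rfl
      have hr' : T.bar.Run u ⟨T.qfin, [], 0⟩
          ⟨T.qinit, [], nextHead u.length 0 (-(T.dir T.qinit))⟩ v.reverse := hr
      rw [show nextHead u.length 0 (-(T.dir T.qinit)) = 0 by rw [hdi]; rfl] at hr'
      show T.bar.Run u ⟨T.bar.qinit, [], 0⟩ ⟨T.bar.qfin, [], 0⟩ v.reverse
      exact hr'
    · intro hsem
      have hsem' : T.bar.Run u ⟨T.qfin, [], 0⟩ ⟨T.qinit, [], 0⟩ v.reverse := hsem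
      have hr := run_unbar hDet hdi hsem' rfl
      have hr' : T.Run u ⟨T.qinit, [], 0⟩
          ⟨T.qfin, [], nextHead u.length 0 (T.dir T.qfin)⟩ v.reverse.reverse := hr
      rw [show nextHead u.length 0 (T.dir T.qfin) = 0 by rw [hdf]; rfl,
          List.reverse_reverse] at hr'
      exact hr'

end RevPeb
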